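/- For the M&M game with two players each starting with k ≥ 1 M&M's and both coins having heads-probability p ∈ (0,1), the probability of a tie equals ∑_{n=k}^∞ C(n-1,k-1)^2 p^{2k} (1-p)^{2(n-k)}, and this series converges. -/

import Mathlib

open MeasureTheory ProbabilityTheory

namespace MMAux

noncomputable def W (p : ℝ) {n : ℕ} (f : Fin n → Bool) : ℝ :=
  ∏ i, if f i then p else 1 - p

lemma W_nonneg {p : ℝ} (h0 : 0 ≤ p) (h1 : p ≤ 1) {n : ℕ} (f : Fin n → Bool) :
    0 ≤ W p f :=
  Finset.prod_nonneg fun i _ => by split <;> linarith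

lemma W_sum (p : ℝ) (n : ℕ) : ∑ f : Fin n → Bool, W p f = 1 := by
  have h := Finset.prod_univ_sum (fun _ : Fin n => (Finset.univ : Finset Bool))
    (fun _ b => if b then p else 1 - p)
  rw [Fintype.piFinset_univ] at h
  have : ∑ f : Fin n → Bool, W p f = ∏ _i : Fin n, ∑ b : Bool, (if b then p else 1 - p) := by
    rw [h]; rfl
  rw [this]; simp

def Rk (k : ℕ) {N : ℕ} (m : Fin N) (f : Fin N → Bool) : Prop :=
  (Finset.univ.filter fun i : Fin N => f i = true ∧ i ≤ m).card = k ∧ f m = true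

instance (k : ℕ) {N : ℕ} (m : Fin N) (f : Fin N → Bool) : Decidable (Rk k m f) := by
  unfold Rk; infer_instance

lemma Rk_last_iff (k n : ℕ) (f : Fin (n+1) → Bool) : Rk k (Fin.last n) f ↔
    ((Finset.univ.filter fun i => f i = true).card = k ∧ f (Fin.last n) = true) := by
  unfold Rk
  have : (Finset.univ.filter fun i : Fin (n+1) => f i = true ∧ i ≤ Fin.last n)
      = Finset.univ.filter fun i => f i = true := by
    apply Finset.filter_congr; intro i _; simp [Fin.le_last]
  rw [this]

lemma card_T (k n : ℕ) (hk : 1 ≤ k) :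
    (Finset.univ.filter fun f : Fin (n+1) → Bool => Rk k (Fin.last n) f).card
      = n.choose (k-1) := by
  rw [show (Finset.univ.filter fun f : Fin (n+1) → Bool => Rk k (Fin.last n) f)
      = Finset.univ.filter (fun f : Fin (n+1) → Bool =>
        (Finset.univ.filter fun i => f i = true).card = k ∧ f (Fin.last n) = true) from
    Finset.filter_congr fun f _ => by simp [Rk_last_iff k n f]]
  rw [show n.choose (k-1)
      = (Finset.powersetCard (k-1) ((Finset.univ : Finset (Fin (n+1))).erase (Fin.last n))).card by
    rw [Finset.card_powersetCard, Finset.card_erase_of_mem (Finset.mem_univ _)]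
    simp]
  apply Finset.card_bij'
    (i := fun f _ => ((Finset.univ.filter fun i => f i = true).erase (Fin.last n)))
    (j := fun t _ => fun i => decide (i ∈ insert (Fin.last n) t))
  · intro f hf
    have h' := Finset.mem_filter.mp hf
    have hcard := h'.2.1
    have hlast := h'.2.2
    rw [Finset.mem_powersetCard]
    constructor
    · intro x hx
      obtain ⟨hne, hxf⟩ := Finset.mem_erase.mp hx
      exact Finset.mem_erase.mpr ⟨hne, Finset.mem_univ _⟩
    · rw [Finset.card_erase_of_mem
        (show Fin.last n ∈ Finset.univ.filter (fun i => f i = true) from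
          Finset.mem_filter.mpr ⟨Finset.mem_univ _, hlast⟩), hcard]
  · intro t ht
    obtain ⟨hsub, hcard⟩ := Finset.mem_powersetCard.mp ht
    have hlnot : Fin.last n ∉ t := fun h => (Finset.mem_erase.mp (hsub h)).1 rfl
    refine Finset.mem_filter.mpr ⟨Finset.mem_univ _, ?_, by simp⟩
    have : (Finset.univ.filter fun i : Fin (n+1) => decide (i ∈ insert (Fin.last n) t) = true)
        = insert (Fin.last n) t := by
      ext i; simp
    rw [this, Finset.card_insert_of_notMem hlnot, hcard]
    omega
  · intro f hf
    have h' := Finset.mem_filter.mp hf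
    have hcard := h'.2.1
    have hlast := h'.2.2
    funext x
    have hins : insert (Fin.last n) ((Finset.univ.filter fun i => f i = true).erase (Fin.last n))
        = Finset.univ.filter fun i => f i = true :=
      Finset.insert_erase (Finset.mem_filter.mpr ⟨Finset.mem_univ _, hlast⟩)
    rw [hins]
    cases hfx : f x <;> simp [Finset.mem_filter, hfx]
  · intro t ht
    obtain ⟨hsub, hcard⟩ := Finset.mem_powersetCard.mp ht
    have hlnot : Fin.last n ∉ t := fun h => (Finset.mem_erase.mp (hsub h)).1 rfl
    have : (Finset.univ.filter fun i : Fin (n+1) => decide (i ∈ insert (Fin.last n) t) = true)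
        = insert (Fin.last n) t := by
      ext i; simp
    rw [this, Finset.erase_insert hlnot]

lemma W_const (p : ℝ) (k n : ℕ) (f : Fin (n+1) → Bool) (hf : Rk k (Fin.last n) f) :
    W p f = p ^ k * (1 - p) ^ (n + 1 - k) := by
  obtain ⟨hcard, -⟩ := (Rk_last_iff k n f).mp hf
  rw [Finset.card_filter] at hcard
  have hstep : W p f = p ^ (∑ i : Fin (n+1), if f i = true then 1 else 0)
      * (1 - p) ^ (∑ i : Fin (n+1), if f i = true then 0 else 1) := by
    unfold W
    rw [← Finset.prod_pow_eq_pow_sum, ← Finset.prod_pow_eq_pow_sum, ← Finset.prod_mul_distrib]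
    apply Finset.prod_congr rfl
    intro i _
    by_cases h : f i = true <;> simp [h]
  have hsum : (∑ i : Fin (n+1), if f i = true then 1 else 0)
      + (∑ i : Fin (n+1), if f i = true then 0 else 1) = n + 1 := by
    rw [← Finset.sum_add_distrib]
    have : ∀ i : Fin (n+1), ((if f i = true then 1 else 0) + (if f i = true then 0 else 1)) = 1 :=
      fun i => by by_cases h : f i = true <;> simp [h]
    rw [Finset.sum_congr rfl fun i _ => this i]
    simp
  rw [hstep, hcard, show (∑ i : Fin (n+1), if f i = true then 0 else 1) = n + 1 - k by omega]

lemma sum_W_last (p : ℝ) (k n : ℕ) (hk : 1 ≤ k) :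
    ∑ f ∈ Finset.univ.filter (fun f : Fin (n+1) → Bool => Rk k (Fin.last n) f), W p f
      = (n.choose (k-1) : ℝ) * (p ^ k * (1 - p) ^ (n + 1 - k)) := by
  rw [Finset.sum_congr rfl (fun f hf => W_const p k n f (Finset.mem_filter.mp hf).2)]
  rw [Finset.sum_const, card_T k n hk, nsmul_eq_mul]

lemma card_bridge (b : ℕ → Bool) (N n : ℕ) (h : n < N) :
    ((Finset.range (n+1)).filter fun i => b i = true).card
      = (Finset.univ.filter fun i : Fin N => b ↑i = true ∧ i ≤ (⟨n, h⟩ : Fin N)).card := by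
  rw [Finset.card_filter, Finset.card_filter]
  have h1 : ∀ i : Fin N, (if (b ↑i = true ∧ i ≤ (⟨n, h⟩ : Fin N)) then (1:ℕ) else 0)
      = (fun j : ℕ => if (b j = true ∧ j ≤ n) then (1:ℕ) else 0) ↑i := by
    intro i; simp [Fin.le_def]
  calc ∑ i ∈ Finset.range (n+1), (if b i = true then (1:ℕ) else 0)
      = ∑ i ∈ Finset.range (n+1), (if (b i = true ∧ i ≤ n) then (1:ℕ) else 0) := by
        refine Finset.sum_congr rfl fun i hi => ?_
        have := Nat.lt_succ_iff.mp (Finset.mem_range.mp hi)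
        simp [this]
    _ = ∑ i ∈ Finset.range N, (if (b i = true ∧ i ≤ n) then (1:ℕ) else 0) := by
        refine Finset.sum_subset (Finset.range_subset_range.mpr h) fun x _ hx => ?_
        have : ¬ x ≤ n := fun hle => hx (Finset.mem_range.mpr (Nat.lt_succ_of_le hle))
        simp [this]
    _ = ∑ i : Fin N, (fun j : ℕ => if (b j = true ∧ j ≤ n) then (1:ℕ) else 0) ↑i :=
        (Fin.sum_univ_eq_sum_range _ N).symm
    _ = ∑ i : Fin N, (if (b ↑i = true ∧ i ≤ (⟨n, h⟩ : Fin N)) then (1:ℕ) else 0) :=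
        Finset.sum_congr rfl fun i _ => (h1 i).symm

lemma Rk_uniq {k N : ℕ} (f : Fin N → Bool) (m₁ m₂ : Fin N)
    (h1 : Rk k m₁ f) (h2 : Rk k m₂ f) : m₁ = m₂ := by
  have aux : ∀ m₁ m₂ : Fin N, m₁ < m₂ → Rk k m₁ f → Rk k m₂ f → False := by
    intro a b hab ha hb
    have hsub : insert b (Finset.univ.filter fun i => f i = true ∧ i ≤ a)
        ⊆ Finset.univ.filter fun i => f i = true ∧ i ≤ b := by
      intro x hx
      rcases Finset.mem_insert.mp hx with rfl | hx
      · exact Finset.mem_filter.mpr ⟨Finset.mem_univ _, hb.2, le_refl _⟩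
      · obtain ⟨-, hfx, hle⟩ := Finset.mem_filter.mp hx
        exact Finset.mem_filter.mpr ⟨Finset.mem_univ _, hfx, hle.trans hab.le⟩
    have hbn : b ∉ Finset.univ.filter fun i => f i = true ∧ i ≤ a := by
      intro hx
      exact absurd (Finset.mem_filter.mp hx).2.2 (not_le.mpr hab)
    have hc := Finset.card_le_card hsub
    rw [Finset.card_insert_of_notMem hbn, ha.1, hb.1] at hc
    omega
  rcases lt_trichotomy m₁ m₂ with h | h | h
  · exact absurd (aux m₁ m₂ h h1 h2) not_false
  · exact h
  · exact absurd (aux m₂ m₁ h h2 h1) not_false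

lemma sum_SR (p : ℝ) (k N : ℕ) (m : Fin N) :
    ∑ fg ∈ Finset.univ.filter
        (fun fg : (Fin N → Bool) × (Fin N → Bool) => Rk k m fg.1 ∧ Rk k m fg.2),
      W p fg.1 * W p fg.2
      = (∑ f ∈ Finset.univ.filter (fun f => Rk k m f), W p f)
        * (∑ f ∈ Finset.univ.filter (fun f => Rk k m f), W p f) := by
  rw [← Finset.univ_product_univ, Finset.filter_product, Finset.sum_product,
    Finset.sum_mul_sum]

variable {Ω : Type*} [MeasureSpace Ω] [IsProbabilityMeasure (ℙ : Measure Ω)]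
  {p : ℝ} {C₁ C₂ : ℕ → Ω → Bool}

lemma cyl (h0 : 0 ≤ p) (h1 : p ≤ 1)
    (hiid : ∀ n : ℕ, ∀ f g : Fin n → Bool,
      ℙ {ω | ∀ i : Fin n, C₁ i ω = f i ∧ C₂ i ω = g i} =
        ENNReal.ofReal ((∏ i, if f i then p else 1 - p) *
          (∏ i, if g i then p else 1 - p)))
    (n : ℕ) (S : Finset ((Fin n → Bool) × (Fin n → Bool))) :
    ℙ {ω | ((fun i => C₁ i ω, fun i => C₂ i ω) : (Fin n → Bool) × (Fin n → Bool)) ∈ S}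
      = ENNReal.ofReal (∑ fg ∈ S, W p fg.1 * W p fg.2) := by
  have hwnn : ∀ fg : (Fin n → Bool) × (Fin n → Bool), 0 ≤ W p fg.1 * W p fg.2 :=
    fun fg => mul_nonneg (W_nonneg h0 h1 _) (W_nonneg h0 h1 _)
  have upper : ∀ T : Finset ((Fin n → Bool) × (Fin n → Bool)),
      ℙ {ω | ((fun i => C₁ i ω, fun i => C₂ i ω) : (Fin n → Bool) × (Fin n → Bool)) ∈ T}
        ≤ ENNReal.ofReal (∑ fg ∈ T, W p fg.1 * W p fg.2) := by
    intro T
    have hset : {ω | ((fun i => C₁ i ω, fun i => C₂ i ω) : (Fin n → Bool) × (Fin n → Bool)) ∈ T}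
        = ⋃ fg ∈ T, {ω | ∀ i : Fin n, C₁ i ω = fg.1 i ∧ C₂ i ω = fg.2 i} := by
      ext ω
      simp only [Set.mem_setOf_eq, Set.mem_iUnion]
      constructor
      · intro h; exact ⟨_, h, fun i => ⟨rfl, rfl⟩⟩
      · rintro ⟨fg, hfg, h⟩
        have : ((fun i => C₁ i ω, fun i => C₂ i ω) : (Fin n → Bool) × (Fin n → Bool)) = fg :=
          Prod.ext (funext fun i => (h i).1) (funext fun i => (h i).2)
        rw [this]; exact hfg
    calc ℙ {ω | ((fun i => C₁ i ω, fun i => C₂ i ω) : (Fin n → Bool) × (Fin n → Bool)) ∈ T}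
        = ℙ (⋃ fg ∈ T, {ω | ∀ i : Fin n, C₁ i ω = fg.1 i ∧ C₂ i ω = fg.2 i}) := by rw [hset]
      _ ≤ ∑ fg ∈ T, ℙ {ω | ∀ i : Fin n, C₁ i ω = fg.1 i ∧ C₂ i ω = fg.2 i} :=
          measure_biUnion_finset_le T _
      _ = ∑ fg ∈ T, ENNReal.ofReal (W p fg.1 * W p fg.2) :=
          Finset.sum_congr rfl fun fg _ => hiid n fg.1 fg.2
      _ = ENNReal.ofReal (∑ fg ∈ T, W p fg.1 * W p fg.2) :=
          (ENNReal.ofReal_sum_of_nonneg fun fg _ => hwnn fg).symm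
  have htotal : ∑ fg ∈ S, W p fg.1 * W p fg.2 + ∑ fg ∈ Sᶜ, W p fg.1 * W p fg.2 = 1 := by
    rw [Finset.sum_add_sum_compl]
    have : ∑ fg : (Fin n → Bool) × (Fin n → Bool), W p fg.1 * W p fg.2
        = (∑ f : Fin n → Bool, W p f) * (∑ g : Fin n → Bool, W p g) := by
      rw [Finset.sum_mul_sum, Fintype.sum_prod_type]
    rw [this, W_sum, one_mul]
  have key : ENNReal.ofReal (∑ fg ∈ S, W p fg.1 * W p fg.2)
      + ENNReal.ofReal (∑ fg ∈ Sᶜ, W p fg.1 * W p fg.2) = 1 := by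
    rw [← ENNReal.ofReal_add (Finset.sum_nonneg fun fg _ => hwnn fg)
      (Finset.sum_nonneg fun fg _ => hwnn fg), htotal, ENNReal.ofReal_one]
  have cover : {ω | ((fun i => C₁ i ω, fun i => C₂ i ω) : (Fin n → Bool) × (Fin n → Bool)) ∈ S}
      ∪ {ω | ((fun i => C₁ i ω, fun i => C₂ i ω) : (Fin n → Bool) × (Fin n → Bool)) ∈ Sᶜ}
      = Set.univ := by
    ext ω; simp [Finset.mem_compl, em]
  have hone : (1 : ENNReal)
      ≤ ℙ {ω | ((fun i => C₁ i ω, fun i => C₂ i ω) : (Fin n → Bool) × (Fin n → Bool)) ∈ S}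
        + ENNReal.ofReal (∑ fg ∈ Sᶜ, W p fg.1 * W p fg.2) := by
    calc (1 : ENNReal) = ℙ (Set.univ : Set Ω) := measure_univ.symm
      _ = ℙ ({ω | ((fun i => C₁ i ω, fun i => C₂ i ω) : (Fin n → Bool) × (Fin n → Bool)) ∈ S}
          ∪ {ω | ((fun i => C₁ i ω, fun i => C₂ i ω) : (Fin n → Bool) × (Fin n → Bool)) ∈ Sᶜ}) := by
          rw [cover]
      _ ≤ _ + _ := measure_union_le _ _
      _ ≤ _ := add_le_add le_rfl (upper Sᶜ)
  refine le_antisymm (upper S) ?_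
  have hsub : ENNReal.ofReal (∑ fg ∈ S, W p fg.1 * W p fg.2)
      = 1 - ENNReal.ofReal (∑ fg ∈ Sᶜ, W p fg.1 * W p fg.2) := by
    rw [← key, ENNReal.add_sub_cancel_right ENNReal.ofReal_ne_top]
  rw [hsub]
  exact tsub_le_iff_right.mpr hone

end MMAux

open MMAux in
set_option maxHeartbeats 1000000 in
/-- For the M&M game with two players each starting with `k ≥ 1` M&M's and coins
of heads-probability `p ∈ (0,1)`, the tie probability equals
`∑_{n=k}^∞ C(n-1,k-1)² p^{2k} (1-p)^{2(n-k)}` (reindexed by `n = m + k`), and the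
series converges. A player finishes at flip `n` iff the `n`-th flip is their
`k`-th head; a tie is both finishing at the same flip. -/
theorem mm_tie_biased_coin {Ω : Type*} [MeasureSpace Ω]
    [IsProbabilityMeasure (ℙ : Measure Ω)] (k : ℕ) (hk : 1 ≤ k) (p : ℝ)
    (hp : p ∈ Set.Ioo (0 : ℝ) 1) (C₁ C₂ : ℕ → Ω → Bool)
    (hiid : ∀ n : ℕ, ∀ f g : Fin n → Bool,
      ℙ {ω | ∀ i : Fin n, C₁ i ω = f i ∧ C₂ i ω = g i} =
        ENNReal.ofReal ((∏ i, if f i then p else 1 - p) *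
          (∏ i, if g i then p else 1 - p))) :
    ℙ {ω | ∃ n : ℕ,
        ((Finset.range (n + 1)).filter fun i => C₁ i ω = true).card = k ∧
        C₁ n ω = true ∧
        ((Finset.range (n + 1)).filter fun i => C₂ i ω = true).card = k ∧
        C₂ n ω = true} =
      ENNReal.ofReal (∑' m : ℕ,
        (((m + k - 1).choose (k - 1) : ℝ)) ^ 2 * p ^ (2 * k) * (1 - p) ^ (2 * m)) ∧
    Summable (fun m : ℕ =>
      (((m + k - 1).choose (k - 1) : ℝ)) ^ 2 * p ^ (2 * k) * (1 - p) ^ (2 * m)) := by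
  obtain ⟨hp0, hp1⟩ := hp
  have h0 : (0:ℝ) ≤ p := le_of_lt hp0
  have h1 : p ≤ 1 := le_of_lt hp1
  have hx0 : (0:ℝ) ≤ 1 - p := by linarith
  have hxlt : (1:ℝ) - p < 1 := by linarith
  -- target summand
  set g : ℕ → ℝ := fun m =>
    (((m + k - 1).choose (k - 1) : ℝ)) ^ 2 * p ^ (2 * k) * (1 - p) ^ (2 * m) with hg
  -- the per-round events
  set D : ℕ → Set Ω := fun n => {ω |
      ((Finset.range (n + 1)).filter fun i => C₁ i ω = true).card = k ∧
      C₁ n ω = true ∧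
      ((Finset.range (n + 1)).filter fun i => C₂ i ω = true).card = k ∧
      C₂ n ω = true} with hD
  set SR : (N : ℕ) → Fin N → Finset ((Fin N → Bool) × (Fin N → Bool)) :=
    fun N m => Finset.univ.filter fun fg => Rk k m fg.1 ∧ Rk k m fg.2 with hSR
  -- event description via cylinders
  have hDset : ∀ (N n : ℕ) (h : n < N), D n =
      {ω | ((fun i => C₁ i ω, fun i => C₂ i ω) : (Fin N → Bool) × (Fin N → Bool))
        ∈ SR N ⟨n, h⟩} := by
    intro N n h
    ext ω
    have hb1 := card_bridge (fun j => C₁ j ω) N n h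
    have hb2 := card_bridge (fun j => C₂ j ω) N n h
    rw [hD, hSR]
    simp only [Finset.mem_filter, Finset.mem_univ, true_and]
    simp only [Set.mem_setOf_eq, Rk]
    constructor
    · rintro ⟨a, b, c, d⟩
      refine ⟨⟨?_, b⟩, ?_, d⟩
      · rw [← hb1]; exact a
      · rw [← hb2]; exact c
    · rintro ⟨⟨a, b⟩, c, d⟩
      exact ⟨by rw [hb1]; exact a, b, by rw [hb2]; exact c, d⟩
  -- measure of each event, at any sufficiently high level
  have hmeasD : ∀ (N n : ℕ) (h : n < N),
      ℙ (D n) = ENNReal.ofReal (∑ fg ∈ SR N ⟨n, h⟩, W p fg.1 * W p fg.2) := by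
    intro N n h
    rw [hDset N n h]
    exact cyl h0 h1 hiid N (SR N ⟨n, h⟩)
  -- value of each event's measure
  set q : ℕ → ℝ := fun n => (n.choose (k-1) : ℝ) * (p ^ k * (1 - p) ^ (n + 1 - k)) with hq
  have hval : ∀ n : ℕ, ℙ (D n) = ENNReal.ofReal (q n * q n) := by
    intro n
    rw [hmeasD (n+1) n n.lt_succ_self]
    congr 1
    have hlast : (⟨n, n.lt_succ_self⟩ : Fin (n+1)) = Fin.last n := rfl
    rw [hSR, hlast]
    rw [sum_SR p k (n+1) (Fin.last n), sum_W_last p k n hk]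
  -- partial unions
  have hpart : ∀ N : ℕ, ℙ (⋃ n ∈ Finset.range N, D n) = ∑ n ∈ Finset.range N, ℙ (D n) := by
    intro N
    have hset : (⋃ n ∈ Finset.range N, D n) =
        {ω | ((fun i => C₁ i ω, fun i => C₂ i ω) : (Fin N → Bool) × (Fin N → Bool))
          ∈ (Finset.univ : Finset (Fin N)).biUnion (SR N)} := by
      ext ω
      simp only [Set.mem_iUnion, Set.mem_setOf_eq, Finset.mem_biUnion, Finset.mem_univ,
        true_and, exists_prop]
      constructor
      · rintro ⟨n, hn, hω⟩
        have h : n < N := Finset.mem_range.mp hn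
        rw [hDset N n h] at hω
        exact ⟨⟨n, h⟩, hω⟩
      · rintro ⟨m, hω⟩
        refine ⟨m.1, Finset.mem_range.mpr m.2, ?_⟩
        rw [hDset N m.1 m.2]
        exact hω
    have hdisj : (↑(Finset.univ : Finset (Fin N)) : Set (Fin N)).PairwiseDisjoint (SR N) := by
      intro m₁ _ m₂ _ hne
      simp only [Function.onFun]
      rw [Finset.disjoint_left]
      intro fg hfg1 hfg2
      have r1 := (Finset.mem_filter.mp hfg1).2.1
      have r2 := (Finset.mem_filter.mp hfg2).2.1
      exact hne (Rk_uniq fg.1 m₁ m₂ r1 r2)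
    have hnn : ∀ fg : (Fin N → Bool) × (Fin N → Bool), 0 ≤ W p fg.1 * W p fg.2 :=
      fun fg => mul_nonneg (W_nonneg h0 h1 _) (W_nonneg h0 h1 _)
    calc ℙ (⋃ n ∈ Finset.range N, D n)
        = ENNReal.ofReal (∑ fg ∈ (Finset.univ : Finset (Fin N)).biUnion (SR N),
            W p fg.1 * W p fg.2) := by
          rw [hset]; exact cyl h0 h1 hiid N _
      _ = ENNReal.ofReal (∑ m : Fin N, ∑ fg ∈ SR N m, W p fg.1 * W p fg.2) := by
          rw [Finset.sum_biUnion hdisj]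
      _ = ∑ m : Fin N, ENNReal.ofReal (∑ fg ∈ SR N m, W p fg.1 * W p fg.2) :=
          ENNReal.ofReal_sum_of_nonneg fun m _ => Finset.sum_nonneg fun fg _ => hnn fg
      _ = ∑ m : Fin N, ℙ (D m.1) := by
          refine Finset.sum_congr rfl fun m _ => ?_
          rw [hmeasD N m.1 m.2]
      _ = ∑ n ∈ Finset.range N, ℙ (D n) := Fin.sum_univ_eq_sum_range (fun n => ℙ (D n)) N
  -- countable additivity for the union
  have hiUnion : ℙ (⋃ n, D n) = ∑' n, ℙ (D n) := by
    refine le_antisymm (measure_iUnion_le D) ?_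
    rw [ENNReal.tsum_eq_iSup_sum]
    refine iSup_le fun s => ?_
    obtain ⟨N, hN⟩ := s.exists_nat_subset_range
    calc ∑ n ∈ s, ℙ (D n) ≤ ∑ n ∈ Finset.range N, ℙ (D n) :=
          Finset.sum_le_sum_of_subset hN
      _ = ℙ (⋃ n ∈ Finset.range N, D n) := (hpart N).symm
      _ ≤ ℙ (⋃ n, D n) := by
          refine measure_mono ?_
          intro ω hω
          simp only [Set.mem_iUnion] at hω ⊢
          obtain ⟨n, _, hn⟩ := hω
          exact ⟨n, hn⟩
  -- summability of the target series
  set y : ℝ := (1 - p) ^ 2 with hy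
  have hy0 : 0 < y := pow_pos (by linarith) 2
  have hylt : y < 1 := by nlinarith
  have hsummg : Summable g := by
    set e : ℕ := 2 * (k - 1) with he
    have hbase : Summable (fun m : ℕ => (m : ℝ) ^ e * y ^ m) :=
      summable_pow_mul_geometric_of_norm_lt_one e
        (by rw [Real.norm_eq_abs, abs_of_nonneg hy0.le]; exact hylt)
    have hshift : Summable (fun m : ℕ => ((m + 1 : ℕ) : ℝ) ^ e * y ^ (m + 1)) :=
      (summable_nat_add_iff (f := fun m : ℕ => (m : ℝ) ^ e * y ^ m) 1).mpr hbase
    have hmaj : Summable (fun m : ℕ => ((m : ℝ) + 1) ^ e * y ^ m) := by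
      refine (hshift.mul_left (1 / y)).congr fun m => ?_
      push_cast
      rw [pow_succ]
      field_simp
    have hgnn : ∀ m : ℕ, 0 ≤ g m := fun m => by
      have : (0:ℝ) ≤ (((m + k - 1).choose (k - 1) : ℝ)) ^ 2 := sq_nonneg _
      have h2 : (0:ℝ) ≤ p ^ (2 * k) := pow_nonneg h0 _
      have h3 : (0:ℝ) ≤ (1 - p) ^ (2 * m) := pow_nonneg hx0 _
      rw [hg]
      positivity
    refine Summable.of_nonneg_of_le hgnn ?_
      (hmaj.mul_left ((k : ℝ) ^ e * p ^ (2 * k)))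
    intro m
    have hcnat : (m + k - 1).choose (k - 1) ≤ (k * (m + 1)) ^ (k - 1) := by
      refine le_trans (Nat.choose_le_pow _ _) (Nat.pow_le_pow_left ?_ _)
      have hmk : m ≤ k * m := Nat.le_mul_of_pos_left m (by omega)
      have : k * (m + 1) = k * m + k := by ring
      omega
    have hc : ((m + k - 1).choose (k - 1) : ℝ) ≤ ((k : ℝ) * ((m : ℝ) + 1)) ^ (k - 1) := by
      calc ((m + k - 1).choose (k - 1) : ℝ)
          ≤ (((k * (m + 1)) ^ (k - 1) : ℕ) : ℝ) := Nat.cast_le.mpr hcnat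
        _ = ((k : ℝ) * ((m : ℝ) + 1)) ^ (k - 1) := by push_cast; ring
    have hgy : g m = (((m + k - 1).choose (k - 1) : ℝ)) ^ 2 * p ^ (2 * k) * y ^ m := by
      rw [hg, hy, ← pow_mul]
    rw [hgy]
    have hstep : (((m + k - 1).choose (k - 1) : ℝ)) ^ 2 * p ^ (2 * k) * y ^ m
        ≤ (((k : ℝ) * ((m : ℝ) + 1)) ^ (k - 1)) ^ 2 * p ^ (2 * k) * y ^ m := by
      gcongr
    refine hstep.trans (le_of_eq ?_)
    rw [← pow_mul, mul_pow, he, Nat.mul_comm 2 (k - 1)]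
    ring
  -- reindexing
  set r : ℕ → ℝ := fun n => q n * q n with hr
  have heq : ∀ m : ℕ, r (m + (k - 1)) = g m := by
    intro m
    rw [hr, hq, hg]
    simp only
    rw [show m + (k - 1) = m + k - 1 from by omega,
      show m + k - 1 + 1 - k = m from by omega,
      show 2 * k = k + k from by ring, show 2 * m = m + m from by ring,
      pow_add, pow_add]
    ring
  have hrs : Summable (fun m => r (m + (k - 1))) := hsummg.congr fun m => (heq m).symm
  have hrsum : Summable r := (summable_nat_add_iff (k - 1)).mp hrs
  have h7 := Summable.sum_add_tsum_nat_add (k - 1) hrsum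
  have h8 : ∑ i ∈ Finset.range (k - 1), r i = 0 := by
    refine Finset.sum_eq_zero fun i hi => ?_
    have : i.choose (k - 1) = 0 := Nat.choose_eq_zero_of_lt (Finset.mem_range.mp hi)
    rw [hr, hq]
    simp only
    rw [this]
    push_cast
    ring
  have hsum_eq : ∑' n : ℕ, r n = ∑' m : ℕ, g m := by
    rw [← h7, h8, zero_add, tsum_congr heq]
  have hrnn : ∀ n : ℕ, 0 ≤ r n := fun n => mul_self_nonneg _
  -- final assembly
  have hset : {ω | ∃ n : ℕ,
      ((Finset.range (n + 1)).filter fun i => C₁ i ω = true).card = k ∧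
      C₁ n ω = true ∧
      ((Finset.range (n + 1)).filter fun i => C₂ i ω = true).card = k ∧
      C₂ n ω = true} = ⋃ n, D n := by
    ext ω
    rw [Set.mem_iUnion]
    rfl
  refine ⟨?_, hsummg⟩
  calc ℙ {ω | ∃ n : ℕ,
        ((Finset.range (n + 1)).filter fun i => C₁ i ω = true).card = k ∧
        C₁ n ω = true ∧
        ((Finset.range (n + 1)).filter fun i => C₂ i ω = true).card = k ∧
        C₂ n ω = true}
      = ℙ (⋃ n, D n) := by rw [hset]
    _ = ∑' n, ℙ (D n) := hiUnion
    _ = ∑' n, ENNReal.ofReal (r n) := tsum_congr fun n => hval n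
    _ = ENNReal.ofReal (∑' n, r n) := (ENNReal.ofReal_tsum_of_nonneg hrnn hrsum).symm
    _ = ENNReal.ofReal (∑' m, g m) := by rw [hsum_eq]
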